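/- Let d ≥ 1, let D ⊆ ℝ^d be open, let L be continuous on D², and set K(x,y) := L(x,y) + log(1/|x−y|). Let μ be a positive Borel measure on D such that ∫_{D}∫_{D} |K(x,y)| μ(dx) μ(dy) < ∞. Then μ(D') < ∞ for every bounded open set D' whose closure is contained in D. -/
import Mathlib


open MeasureTheory Filter
open scoped ENNReal Classical

noncomputable section

abbrev Ed (d : ℕ) := EuclideanSpace ℝ (Fin d)

theorem statement19
    (d : ℕ) (hd : 1 ≤ d)
    (D : Set (Ed d)) (hD : IsOpen D)
    (K L : Ed d → Ed d → ℝ)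
    (hLcont : ContinuousOn (fun p : Ed d × Ed d => L p.1 p.2) (D ×ˢ D))
    (hKdef : ∀ x ∈ D, ∀ y ∈ D, x ≠ y → K x y = L x y + Real.log (1 / ‖x - y‖))
    (μ : Measure (Ed d))
    -- ∫_D ∫_D |K(x,y)| μ(dx) μ(dy) < ∞ (with |K(x,x)| = +∞, since K(x,x) = L(x,x) + log(1/0))
    (hμK : (∫⁻ x in D, ∫⁻ y in D,
        (if x = y then (⊤ : ℝ≥0∞) else ENNReal.ofReal |K x y|) ∂μ ∂μ) < ⊤)
    (D' : Set (Ed d)) (hD'o : IsOpen D') (hD'b : Bornology.IsBounded D')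
    (hD'cl : closure D' ⊆ D) :
    μ D' < ⊤ := by
  set f : Ed d → Ed d → ℝ≥0∞ := fun x y =>
    (if x = y then (⊤ : ℝ≥0∞) else ENNReal.ofReal |K x y|) with hf
  -- bound |L| on closure D' × closure D'
  have hScomp : IsCompact (closure D' ×ˢ closure D') :=
    hD'b.isCompact_closure.prod hD'b.isCompact_closure
  have hSsub : closure D' ×ˢ closure D' ⊆ D ×ˢ D := Set.prod_mono hD'cl hD'cl
  obtain ⟨M, hM⟩ := hScomp.exists_bound_of_continuousOn (hLcont.mono hSsub)
  set δ : ℝ := Real.exp (-(M + 1)) with hδ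
  have hδpos : 0 < δ := Real.exp_pos _
  -- key pointwise bound
  have key : ∀ x ∈ closure D', ∀ y ∈ closure D', dist x y < δ → (1 : ℝ≥0∞) ≤ f x y := by
    intro x hx y hy hxy
    by_cases hEq : x = y
    · simp [hf, hEq]
    · have hxD : x ∈ D := hD'cl hx
      have hyD : y ∈ D := hD'cl hy
      have hK := hKdef x hxD y hyD hEq
      have hnorm : ‖x - y‖ = dist x y := (dist_eq_norm x y).symm
      have hpos : 0 < ‖x - y‖ := by
        rw [hnorm]; exact dist_pos.2 hEq
      have hlog : M + 1 ≤ Real.log (1 / ‖x - y‖) := by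
        rw [Real.log_div (by norm_num) (ne_of_gt hpos), Real.log_one, zero_sub, le_neg]
        calc Real.log ‖x - y‖ ≤ Real.log δ := Real.log_le_log hpos (by rw [hnorm]; exact hxy.le)
          _ = -(M + 1) := Real.log_exp _
      have hL : |L x y| ≤ M := hM (x, y) ⟨hx, hy⟩
      have hK1 : (1 : ℝ) ≤ K x y := by
        rw [hK]
        have : -M ≤ L x y := neg_le_of_abs_le hL
        linarith
      have : (1 : ℝ) ≤ |K x y| := le_trans hK1 (le_abs_self _)
      simp only [hf, if_neg hEq]
      exact (ENNReal.one_le_ofReal).2 this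
  -- finite cover by balls of radius δ/2
  have hcov : closure D' ⊆ ⋃ c : Ed d, Metric.ball c (δ / 2) := by
    intro x _; exact Set.mem_iUnion.2 ⟨x, Metric.mem_ball_self (by linarith)⟩
  obtain ⟨t, ht⟩ := hD'b.isCompact_closure.elim_finite_subcover
    (fun c : Ed d => Metric.ball c (δ / 2)) (fun c => Metric.isOpen_ball) hcov
  -- each piece has finite measure
  have hpiece : ∀ c : Ed d, μ (Metric.ball c (δ / 2) ∩ D') < ⊤ := by
    intro c
    set A := Metric.ball c (δ / 2) ∩ D' with hA
    have hAm : MeasurableSet A := (Metric.isOpen_ball.inter hD'o).measurableSet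
    have hAsub : A ⊆ D := fun x hx => hD'cl (subset_closure hx.2)
    have hAdist : ∀ x ∈ A, ∀ y ∈ A, dist x y < δ := by
      intro x hx y hy
      calc dist x y ≤ dist x c + dist c y := dist_triangle _ _ _
        _ < δ / 2 + δ / 2 := by
            have h1 := Metric.mem_ball.1 hx.1
            have h2 := Metric.mem_ball.1 hy.1
            rw [dist_comm c y]; linarith
        _ = δ := by ring
    have h1 : μ A * μ A ≤ ∫⁻ x in A, ∫⁻ y in A, f x y ∂μ ∂μ := by
      calc μ A * μ A = ∫⁻ _ in A, μ A ∂μ := by rw [setLIntegral_const]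
        _ ≤ ∫⁻ x in A, ∫⁻ y in A, f x y ∂μ ∂μ := by
            refine lintegral_mono_ae ((ae_restrict_iff' hAm).2 (ae_of_all _ fun x hx => ?_))
            calc μ A = ∫⁻ _ in A, 1 ∂μ := by rw [setLIntegral_one]
              _ ≤ ∫⁻ y in A, f x y ∂μ :=
                  lintegral_mono_ae ((ae_restrict_iff' hAm).2 (ae_of_all _ fun y hy =>
                    key x (subset_closure hx.2) y (subset_closure hy.2) (hAdist x hx y hy)))
    have h2 : (∫⁻ x in A, ∫⁻ y in A, f x y ∂μ ∂μ) ≤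
        ∫⁻ x in D, ∫⁻ y in D, f x y ∂μ ∂μ := by
      calc (∫⁻ x in A, ∫⁻ y in A, f x y ∂μ ∂μ)
          ≤ ∫⁻ x in A, ∫⁻ y in D, f x y ∂μ ∂μ :=
            lintegral_mono fun x => lintegral_mono_set hAsub
        _ ≤ ∫⁻ x in D, ∫⁻ y in D, f x y ∂μ ∂μ := lintegral_mono_set hAsub
    have hfin : μ A * μ A < ⊤ := lt_of_le_of_lt (h1.trans h2) hμK
    by_contra h
    rw [not_lt, top_le_iff] at h
    rw [h, ENNReal.top_mul_top] at hfin
    exact lt_irrefl _ hfin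
  -- conclude
  have hsub : D' ⊆ ⋃ c ∈ t, Metric.ball c (δ / 2) ∩ D' := by
    intro x hx
    obtain ⟨c, hc, hxc⟩ := Set.mem_iUnion₂.1 (ht (subset_closure hx))
    exact Set.mem_iUnion₂.2 ⟨c, hc, hxc, hx⟩
  calc μ D' ≤ μ (⋃ c ∈ t, Metric.ball c (δ / 2) ∩ D') := measure_mono hsub
    _ ≤ ∑ c ∈ t, μ (Metric.ball c (δ / 2) ∩ D') := measure_biUnion_finset_le _ _
    _ < ⊤ := ENNReal.sum_lt_top.2 fun c _ => hpiece c
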